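/- For every integer n ≥ 2 one has ϑ/ζ(n) ≤ ϑ_n ≤ ϑ/ζ(n+1), where ζ is the Riemann zeta function. (Equivalently, since ϑ_n/ϑ = ∏_p (1 − 1/(p^{n−1}(p² − p + 1))) and p ≤ p² − p + 1 ≤ p² for every prime p, each factor lies between 1 − p^{−n} and 1 − p^{−(n+1)}.) -/

import Mathlib

/-- `ϑ_n`: the product over all primes `p` of `1 + (p^(n-1) - 1)/(p^(n+1) - p^n)`. -/
noncomputable def thetaN (n : ℕ) : ℝ :=
  ∏' p : Nat.Primes, (1 + ((p : ℝ) ^ (n - 1) - 1) / ((p : ℝ) ^ (n + 1) - (p : ℝ) ^ n))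

/-- `ϑ`: the product over all primes `p` of `1 + 1/(p² - p)`. -/
noncomputable def theta : ℝ :=
  ∏' p : Nat.Primes, (1 + 1 / ((p : ℝ) ^ 2 - p))

/-- The Riemann zeta function at a natural number `k`, as the real series `∑ m ≥ 1, m⁻ᵏ`. -/
noncomputable def zetaNat (k : ℕ) : ℝ :=
  ∑' m : ℕ, 1 / (m + 1 : ℝ) ^ k


open Real

lemma multipliable_of_summable_log {ι : Type*} {f : ι → ℝ} (hpos : ∀ i, 0 < f i)
    (h : Summable fun i => Real.log (f i)) : Multipliable f := by
  have H := h.hasSum.rexp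
  have he : (fun i => Real.exp (Real.log (f i))) = f := funext fun i => Real.exp_log (hpos i)
  exact Multipliable.congr ⟨_, H⟩ fun i => Real.exp_log (hpos i)

lemma neg_log_one_sub_le {x : ℝ} (h0 : 0 ≤ x) (h : x ≤ 1/2) : -Real.log (1 - x) ≤ 2 * x := by
  have h1 : (0:ℝ) < 1 - x := by linarith
  have h2 := Real.log_le_sub_one_of_pos (x := (1-x)⁻¹) (by positivity)
  rw [Real.log_inv] at h2
  have h3 : (1-x)⁻¹ - 1 = x / (1-x) := by field_simp; ring
  have h4 : x / (1-x) ≤ 2*x := by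
    rw [div_le_iff₀ h1]; nlinarith
  linarith

lemma summable_primes_sq_inv : Summable (fun p : Nat.Primes => ((p : ℝ)^2)⁻¹) := by
  have h : Summable (fun n : ℕ => ((n : ℝ)^2)⁻¹) := Real.summable_nat_pow_inv.mpr one_lt_two
  exact h.comp_injective Nat.Primes.coe_nat_injective

lemma summable_zeta_summand {k : ℕ} (hk : 2 ≤ k) :
    Summable (fun m : ℕ => ((m : ℝ) ^ k)⁻¹) :=
  Real.summable_nat_pow_inv.mpr (by omega)

lemma one_le_zetaNat {k : ℕ} (hk : 2 ≤ k) : 1 ≤ zetaNat k := by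
  have hs : Summable (fun m : ℕ => 1 / ((m : ℝ) + 1) ^ k) := by
    have := ((summable_nat_add_iff 1).mpr (summable_zeta_summand hk))
    refine this.congr fun m => ?_
    push_cast
    rw [one_div]
  have := Summable.le_tsum hs 0 (fun j _ => by positivity)
  simpa [zetaNat] using this

noncomputable def zm (k : ℕ) (hk0 : k ≠ 0) : ℕ →*₀ ℝ where
  toFun := fun m => ((m : ℝ) ^ k)⁻¹
  map_zero' := by simp [zero_pow hk0]
  map_one' := by simp
  map_mul' := fun a b => by push_cast; rw [mul_pow, mul_inv]

lemma zm_apply (k : ℕ) (hk0 : k ≠ 0) (m : ℕ) : zm k hk0 m = ((m : ℝ) ^ k)⁻¹ := rfl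

lemma euler_hasProd {k : ℕ} (hk : 2 ≤ k) :
    HasProd (fun p : Nat.Primes => ((1 : ℝ) - ((p : ℝ) ^ k)⁻¹)⁻¹) (zetaNat k) := by
  have hk0 : k ≠ 0 := by omega
  have hsum : Summable (fun m => ‖zm k hk0 m‖) := by
    refine (summable_zeta_summand hk).congr fun m => ?_
    rw [zm_apply]
    exact (Real.norm_of_nonneg (by positivity)).symm
  have H := EulerProduct.eulerProduct_completely_multiplicative_hasProd (f := zm k hk0) hsum
  have htsum : ∑' n, zm k hk0 n = zetaNat k := by
    rw [Summable.tsum_eq_zero_add (by exact hsum.of_norm)]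
    rw [map_zero, zero_add, zetaNat]
    refine tsum_congr fun m => ?_
    rw [zm_apply]
    push_cast
    rw [one_div]
  rw [htsum] at H
  simpa only [zm_apply] using H

lemma hasProd_z {k : ℕ} (hk : 2 ≤ k) :
    HasProd (fun p : Nat.Primes => (1 : ℝ) - ((p : ℝ) ^ k)⁻¹) (zetaNat k)⁻¹ := by
  have H := euler_hasProd hk
  have hpos : (0:ℝ) < zetaNat k := lt_of_lt_of_le one_pos (one_le_zetaNat hk)
  have := (Filter.Tendsto.inv₀ H hpos.ne')
  refine this.congr fun s => ?_
  rw [← Finset.prod_inv_distrib]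
  exact Finset.prod_congr rfl fun p _ => inv_inv _

lemma factor_id (m : ℕ) {q : ℝ} (hq : 2 ≤ q) :
    1 + (q ^ (m+1) - 1) / (q ^ (m+3) - q ^ (m+2)) =
    (1 + 1 / (q^2 - q)) * (1 - (q ^ (m+1) * (q^2 - q + 1))⁻¹) := by
  have hq0 : 0 < q := by linarith
  have h1 : q^2 - q ≠ 0 := by nlinarith
  have h2 : q ^ (m+3) - q ^ (m+2) ≠ 0 := by
    have hp : 0 < q ^ (m+2) * (q - 1) := by
      have := pow_pos hq0 (m+2); nlinarith
    have e : q ^ (m+3) - q ^ (m+2) = q ^ (m+2) * (q - 1) := by ring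
    rw [e]; exact ne_of_gt hp
  have h3 : q ^ (m+1) * (q^2 - q + 1) ≠ 0 := by
    have : (0:ℝ) < q^2 - q + 1 := by nlinarith
    positivity
  rw [one_add_div h2, one_add_div h1, inv_eq_one_div, one_sub_div h3, div_mul_div_comm,
    div_eq_div_iff h2 (mul_ne_zero h1 h3)]
  ring

lemma x_bounds (m : ℕ) {q : ℝ} (hq : 2 ≤ q) :
    0 < (q ^ (m+1) * (q^2 - q + 1))⁻¹ ∧
    (q ^ (m+1) * (q^2 - q + 1))⁻¹ ≤ (q^2)⁻¹ := by
  have hq0 : 0 < q := by linarith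
  have h1 : (0:ℝ) < q^2 - q + 1 := by nlinarith
  have hp1 : 0 < q ^ (m+1) := pow_pos hq0 _
  constructor
  · positivity
  · apply inv_anti₀ (by positivity)
    calc q^2 = q * q := sq q
    _ ≤ q ^ (m+1) * (q^2 - q + 1) := by
        apply mul_le_mul ?_ (by nlinarith) (by linarith) (le_of_lt hp1)
        calc q = q ^ 1 := (pow_one q).symm
        _ ≤ q ^ (m+1) := pow_le_pow_right₀ (by linarith) (by omega)

lemma z_le_r (m : ℕ) {q : ℝ} (hq : 2 ≤ q) :
    1 - (q ^ (m+2))⁻¹ ≤ 1 - (q ^ (m+1) * (q^2 - q + 1))⁻¹ := by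
  have hq0 : 0 < q := by linarith
  have h := inv_anti₀ (pow_pos hq0 (m+2)) (by
    calc q ^ (m+2) = q ^ (m+1) * q := by ring
    _ ≤ q ^ (m+1) * (q^2 - q + 1) :=
        mul_le_mul_of_nonneg_left (by nlinarith) (le_of_lt (pow_pos hq0 (m+1))))
  linarith

lemma r_le_z (m : ℕ) {q : ℝ} (hq : 2 ≤ q) :
    1 - (q ^ (m+1) * (q^2 - q + 1))⁻¹ ≤ 1 - (q ^ (m+3))⁻¹ := by
  have hq0 : 0 < q := by linarith
  have h1 : (0:ℝ) < q^2 - q + 1 := by nlinarith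
  have h := inv_anti₀ (by positivity : (0:ℝ) < q ^ (m+1) * (q^2 - q + 1)) (by
    calc q ^ (m+1) * (q^2 - q + 1) ≤ q ^ (m+1) * q^2 := by
          have := pow_pos hq0 (m+1); nlinarith
    _ = q ^ (m+3) := by ring)
  linarith

lemma z_nonneg (k : ℕ) {q : ℝ} (hq : 2 ≤ q) : 0 ≤ 1 - (q ^ k)⁻¹ := by
  have hq0 : 0 < q := by linarith
  have h1 : (1:ℝ) ≤ q ^ k := one_le_pow₀ (by linarith)
  have := inv_le_one_of_one_le₀ h1
  linarith

theorem thetaN_between (n : ℕ) (hn : 2 ≤ n) :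
    theta / zetaNat n ≤ thetaN n ∧ thetaN n ≤ theta / zetaNat (n + 1) := by
  obtain ⟨m, rfl⟩ : ∃ m, n = m + 2 := ⟨n - 2, by omega⟩
  have hq : ∀ p : Nat.Primes, 2 ≤ (p : ℝ) := fun p => by exact_mod_cast p.2.two_le
  set f : Nat.Primes → ℝ := fun p => 1 + 1 / ((p : ℝ) ^ 2 - (p : ℝ)) with hf
  set r : Nat.Primes → ℝ := fun p => 1 - ((p : ℝ) ^ (m+1) * ((p : ℝ)^2 - (p : ℝ) + 1))⁻¹ with hrdef
  -- positivity facts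
  have hf1 : ∀ p : Nat.Primes, 1 ≤ f p := fun p => by
    have h2 := hq p
    have : (0:ℝ) < (p : ℝ)^2 - (p : ℝ) := by nlinarith
    rw [hf]
    have : 0 ≤ 1 / ((p : ℝ) ^ 2 - (p : ℝ)) := by positivity
    linarith
  have hrx := fun p : Nat.Primes => x_bounds m (hq p)
  have hxle : ∀ p : Nat.Primes, ((p : ℝ) ^ (m+1) * ((p : ℝ)^2 - (p : ℝ) + 1))⁻¹ ≤ 4⁻¹ :=
    fun p => le_trans (hrx p).2 (by
      have h2 := hq p
      apply inv_anti₀ (by norm_num)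
      nlinarith)
  have hrpos : ∀ p : Nat.Primes, 0 < r p := fun p => by
    have := hxle p; rw [hrdef]; dsimp only; linarith [(hrx p).1]
  have hrle1 : ∀ p : Nat.Primes, r p ≤ 1 := fun p => by
    have := (hrx p).1; rw [hrdef]; dsimp only; linarith
  -- summable basics
  have hs2 := summable_primes_sq_inv
  -- multipliable f
  have hMf : Multipliable f := by
    apply _root_.multipliable_of_summable_log (fun p => lt_of_lt_of_le one_pos (hf1 p))
    refine Summable.of_nonneg_of_le (fun p => Real.log_nonneg (hf1 p))
      (fun p => ?_) (hs2.mul_left 2)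
    have h2 := hq p
    have hd : (0:ℝ) < (p : ℝ)^2 - (p : ℝ) := by nlinarith
    have hlog := Real.log_le_sub_one_of_pos (show (0:ℝ) < f p by linarith [hf1 p])
    have he : f p - 1 = 1 / ((p : ℝ)^2 - (p : ℝ)) := by rw [hf]; ring
    rw [he] at hlog
    refine le_trans hlog ?_
    have h4 : (((p:ℝ))^2 - (p:ℝ))⁻¹ ≤ ((p:ℝ)^2/2)⁻¹ := inv_anti₀ (by positivity) (by nlinarith)
    rw [one_div]
    refine le_trans h4 ?_
    rw [inv_div, div_eq_mul_inv]
  -- multipliable r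
  have hMr : Multipliable r := by
    apply _root_.multipliable_of_summable_log hrpos
    have key : Summable fun p : Nat.Primes => -Real.log (r p) := by
      refine Summable.of_nonneg_of_le (fun p => ?_) (fun p => ?_) (hs2.mul_left 2)
      · simp only [neg_nonneg]
        exact Real.log_nonpos (le_of_lt (hrpos p)) (hrle1 p)
      · rw [hrdef]
        refine le_trans (neg_log_one_sub_le (le_of_lt (hrx p).1)
          (le_trans (hxle p) (by norm_num))) ?_
        exact mul_le_mul_of_nonneg_left (hrx p).2 (by norm_num)
    have := key.neg
    simpa using this
  -- HasProd for theta
  have htheta : HasProd f theta := hMf.hasProd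
  have h1theta : 1 ≤ theta := by
    refine ge_of_tendsto' htheta fun s => ?_
    have := Finset.prod_le_prod (s := s) (f := fun _ : Nat.Primes => (1:ℝ)) (g := f)
      (fun p _ => zero_le_one) (fun p _ => hf1 p)
    simpa using this
  -- product identity
  have hgf : (fun p : Nat.Primes =>
      1 + ((p : ℝ) ^ ((m+2) - 1) - 1) / ((p : ℝ) ^ ((m+2) + 1) - (p : ℝ) ^ (m+2))) =
      fun p => f p * r p := by
    funext p
    have : (m+2) - 1 = m+1 := rfl
    rw [this]
    show 1 + ((p : ℝ) ^ (m+1) - 1) / ((p : ℝ) ^ (m+3) - (p : ℝ) ^ (m+2)) = _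
    rw [hf, hrdef]
    exact factor_id m (hq p)
  have hthetaN : thetaN (m+2) = theta * ∏' p, r p := by
    rw [thetaN, hgf, Multipliable.tprod_mul hMf hMr, theta]
  -- comparisons
  set R := ∏' p, r p with hR
  have hRprod : HasProd r R := hMr.hasProd
  have hlow : (zetaNat (m+2))⁻¹ ≤ R := by
    refine le_of_tendsto_of_tendsto' (hasProd_z (by omega)) hRprod fun s => ?_
    refine Finset.prod_le_prod (fun p _ => z_nonneg (m+2) (hq p)) fun p _ => ?_
    rw [hrdef]; exact z_le_r m (hq p)
  have hhigh : R ≤ (zetaNat (m+2+1))⁻¹ := by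
    refine le_of_tendsto_of_tendsto' hRprod (hasProd_z (by omega)) fun s => ?_
    refine Finset.prod_le_prod (fun p _ => le_of_lt (hrpos p)) fun p _ => ?_
    rw [hrdef]
    show _ ≤ 1 - ((p:ℝ) ^ (m+3))⁻¹
    exact r_le_z m (hq p)
  constructor
  · rw [div_eq_mul_inv, hthetaN]
    exact mul_le_mul_of_nonneg_left hlow (by linarith)
  · rw [div_eq_mul_inv, hthetaN]
    exact mul_le_mul_of_nonneg_left hhigh (by linarith)
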